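/- Let Q be a real symmetric positive definite 2n×2n matrix. Then there exist a real symplectic matrix P ∈ Sp(2n, ℝ) and positive reals ω₁, …, ωₙ such that Pᵀ Q P = diag(ω₁, …, ωₙ, ω₁, …, ωₙ) (Williamson's normal form). -/

import Mathlib

open Matrix Module
open scoped RealInnerProductSpace

lemma skew_aux :
    ∀ (m : ℕ) (V : Type) [NormedAddCommGroup V] [InnerProductSpace ℝ V]
      [FiniteDimensional ℝ V], finrank ℝ V = m →
      ∀ (f : V →ₗ[ℝ] V), (∀ x y, ⟪f x, y⟫ = -⟪x, f y⟫) → Function.Injective f →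
      ∃ (k : ℕ) (b : Fin k ⊕ Fin k → V) (d : Fin k → ℝ),
        m = 2 * k ∧ Orthonormal ℝ b ∧ (∀ i, 0 < d i) ∧
        (∀ i, f (b (Sum.inl i)) = -(d i • b (Sum.inr i))) ∧
        (∀ i, f (b (Sum.inr i)) = d i • b (Sum.inl i)) := by
  intro m
  induction m using Nat.strong_induction_on with
  | _ m IH =>
  rcases Nat.eq_zero_or_pos m with rfl | hm
  · intro V _ _ _ hdim f hskew hinj
    refine ⟨0, Sum.elim Fin.elim0 Fin.elim0, Fin.elim0, rfl, ?_, fun i => i.elim0,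
      fun i => i.elim0, fun i => i.elim0⟩
    rw [orthonormal_iff_ite]
    rintro (i | i) <;> exact i.elim0
  intro V _ _ _ hdim f hskew hinj
  have : Nontrivial V := Module.nontrivial_of_finrank_pos (R := ℝ) (hdim ▸ hm)
  -- the symmetric operator f ∘ f
  set T : V →ₗ[ℝ] V := f ∘ₗ f with hT
  have hTsymm : T.IsSymmetric := by
    intro x y
    calc ⟪f (f x), y⟫ = -⟪f x, f y⟫ := hskew _ _
    _ = -(-⟪x, f (f y)⟫) := by rw [hskew]
    _ = ⟪x, f (f y)⟫ := neg_neg _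
  obtain ⟨μ, u, hu0, hTu⟩ : ∃ (μ : ℝ) (u : V), u ≠ 0 ∧ f (f u) = μ • u := by
    obtain ⟨u, hu⟩ := hTsymm.hasEigenvalue_iSup_of_finiteDimensional.exists_hasEigenvector
    exact ⟨_, u, hu.2, hu.apply_eq_smul⟩
  have hfu0 : f u ≠ 0 := fun h => hu0 (hinj (by rw [h, map_zero]))
  have hμneg : μ < 0 := by
    have h1 : ⟪f (f u), u⟫ = -‖f u‖ ^ 2 := by
      rw [hskew, real_inner_self_eq_norm_sq]
    have h2 : ⟪f (f u), u⟫ = μ * ‖u‖ ^ 2 := by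
      rw [hTu, real_inner_smul_left, real_inner_self_eq_norm_sq]
    have h3 : μ * ‖u‖ ^ 2 < 0 := by
      rw [← h2, h1]
      have h4 : 0 < ‖f u‖ := norm_pos_iff.2 hfu0
      nlinarith
    by_contra h
    push_neg at h
    have : 0 ≤ μ * ‖u‖ ^ 2 := mul_nonneg h (sq_nonneg _)
    linarith
  set c := Real.sqrt (-μ) with hc
  have hcpos : 0 < c := Real.sqrt_pos.2 (by linarith)
  have hc2 : c ^ 2 = -μ := Real.sq_sqrt (by linarith)
  set u' : V := ‖u‖⁻¹ • u with hu'
  have hu'norm : ‖u'‖ = 1 := norm_smul_inv_norm hu0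
  have hTu' : f (f u') = μ • u' := by
    rw [hu', LinearMap.map_smul, LinearMap.map_smul, hTu, smul_comm]
  set v : V := c⁻¹ • f u' with hv
  have hfu' : f u' = c • v := by
    rw [hv, smul_smul, mul_inv_cancel₀ hcpos.ne', one_smul]
  have hinner_self_f : ∀ x : V, ⟪x, f x⟫ = 0 := by
    intro x
    have h := hskew x x
    have h2 : ⟪f x, x⟫ = ⟪x, f x⟫ := real_inner_comm _ _
    linarith [h, h2]
  have huv : ⟪u', v⟫ = 0 := by
    rw [hv, real_inner_smul_right, hinner_self_f, mul_zero]
  have hvnorm2 : ⟪v, v⟫ = 1 := by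
    rw [hv, real_inner_smul_left, real_inner_smul_right]
    have : ⟪f u', f u'⟫ = -μ := by
      rw [hskew, hTu', real_inner_smul_right, real_inner_self_eq_norm_sq, hu'norm]
      ring
    rw [this]
    field_simp
    rw [← hc2]
  have hfv : f v = -(c • u') := by
    rw [hv, LinearMap.map_smul, hTu', smul_smul]
    have hcc : c * c = -μ := by rw [← hc2]; ring
    have : c⁻¹ * μ = -c := by
      field_simp
      linarith
    rw [this, neg_smul]
  have hu'v_on : Orthonormal ℝ ![u', v] := by
    rw [orthonormal_iff_ite]
    intro i j
    fin_cases i <;> fin_cases j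
    · simp [real_inner_self_eq_norm_sq, hu'norm]
    · simp [huv]
    · simpa [real_inner_comm v u'] using huv
    · have h := hvnorm2
      rw [real_inner_self_eq_norm_sq] at h
      have := norm_nonneg v
      simp [hvnorm2]
      left
      nlinarith
  -- the invariant 2-dimensional subspace and its orthogonal complement
  set K : Submodule ℝ V := Submodule.span ℝ (Set.range ![u', v]) with hK
  have hu'K : u' ∈ K := Submodule.subset_span ⟨0, rfl⟩
  have hvK : v ∈ K := Submodule.subset_span ⟨1, rfl⟩
  set W := Kᗮ with hW
  have hWu' : ∀ w ∈ W, ⟪(w : V), u'⟫ = 0 := fun w hw =>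
    real_inner_comm w u' ▸ (Submodule.mem_orthogonal K w).1 hw u' hu'K
  have hWv : ∀ w ∈ W, ⟪(w : V), v⟫ = 0 := fun w hw =>
    real_inner_comm w v ▸ (Submodule.mem_orthogonal K w).1 hw v hvK
  have hWinv : ∀ w ∈ W, f w ∈ W := by
    intro w hw
    rw [Submodule.mem_orthogonal]
    intro y hy
    rw [real_inner_comm]
    induction hy using Submodule.span_induction with
    | mem y hy =>
      obtain ⟨i, rfl⟩ := hy
      fin_cases i
      · show ⟪f w, u'⟫ = 0
        rw [hskew, hfu', real_inner_smul_right, hWv w hw]; ring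
      · show ⟪f w, v⟫ = 0
        rw [hskew, hfv, inner_neg_right, real_inner_smul_right, hWu' w hw]; ring
    | zero => rw [inner_zero_right]
    | add y z _ _ hy hz => rw [inner_add_right, hy, hz, add_zero]
    | smul a y _ hy => rw [real_inner_smul_right, hy, mul_zero]
  -- dimension count
  have hKrank : finrank ℝ K = 2 := by
    rw [hK, finrank_span_eq_card hu'v_on.linearIndependent]
    simp
  have hdimW : 2 + finrank ℝ W = m := by
    rw [← hdim, ← hKrank, hW]
    exact K.finrank_add_finrank_orthogonal
  -- restrict f to W and apply the induction hypothesis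
  set g : W →ₗ[ℝ] W := f.restrict hWinv with hg
  have hgskew : ∀ x y : W, ⟪g x, y⟫ = -⟪x, g y⟫ := by
    intro x y
    rw [Submodule.coe_inner, Submodule.coe_inner]
    exact hskew x y
  have hginj : Function.Injective g := by
    intro x y hxy
    have : f x = f y := congrArg Subtype.val hxy
    exact Subtype.ext (hinj this)
  obtain ⟨k, bW, dW, hkdim, hbWon, hdWpos, hbWl, hbWr⟩ :=
    IH (finrank ℝ W) (by omega) W rfl g hgskew hginj
  -- assemble the new orthonormal family
  refine ⟨k + 1,
    Sum.elim (Fin.snoc (fun i => (bW (Sum.inl i) : V)) v)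
             (Fin.snoc (fun i => (bW (Sum.inr i) : V)) u'),
    Fin.snoc dW c, by omega, ?_, ?_, ?_, ?_⟩
  · -- orthonormality
    rw [orthonormal_iff_ite]
    have hON := orthonormal_iff_ite.1 hbWon
    have key : ∀ (x : Fin k ⊕ Fin k), ⟪(bW x : V), u'⟫ = 0 ∧ ⟪(bW x : V), v⟫ = 0 :=
      fun x => ⟨hWu' _ (bW x).2, hWv _ (bW x).2⟩
    rintro (i | i) (j | j) <;>
      induction i using Fin.lastCases <;>
      induction j using Fin.lastCases <;>
      simp only [Sum.elim_inl, Sum.elim_inr, Fin.snoc_last, Fin.snoc_castSucc,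
        Sum.inl.injEq, Sum.inr.injEq]
    · rw [if_pos trivial]; exact hvnorm2
    · next j =>
        rw [if_neg (Fin.castSucc_lt_last j).ne', real_inner_comm]
        exact (key (Sum.inl j)).2
    · next i =>
        rw [if_neg (Fin.castSucc_lt_last i).ne]
        exact (key (Sum.inl i)).2
    · next i j =>
        have h := hON (Sum.inl i) (Sum.inl j)
        rw [Submodule.coe_inner] at h
        simp only [Sum.inl.injEq] at h
        simpa [Fin.castSucc_inj] using h
    · rw [if_neg (by simp), real_inner_comm]; exact huv
    · next j =>
        rw [if_neg (by simp), real_inner_comm]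
        exact (key (Sum.inr j)).2
    · next i =>
        rw [if_neg (by simp)]
        exact (key (Sum.inl i)).1
    · next i j =>
        have h := hON (Sum.inl i) (Sum.inr j)
        rw [Submodule.coe_inner] at h
        simpa using h
    · rw [if_neg (by simp)]; exact huv
    · next j =>
        rw [if_neg (by simp), real_inner_comm]
        exact (key (Sum.inl j)).1
    · next i =>
        rw [if_neg (by simp)]
        exact (key (Sum.inr i)).2
    · next i j =>
        have h := hON (Sum.inr i) (Sum.inl j)
        rw [Submodule.coe_inner] at h
        simpa using h
    · rw [if_pos trivial, real_inner_self_eq_norm_sq, hu'norm]; norm_num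
    · next j =>
        rw [if_neg (Fin.castSucc_lt_last j).ne', real_inner_comm]
        exact (key (Sum.inr j)).1
    · next i =>
        rw [if_neg (Fin.castSucc_lt_last i).ne]
        exact (key (Sum.inr i)).1
    · next i j =>
        have h := hON (Sum.inr i) (Sum.inr j)
        rw [Submodule.coe_inner] at h
        simp only [Sum.inr.injEq] at h
        simpa [Fin.castSucc_inj] using h
  · -- positivity
    intro i
    induction i using Fin.lastCases
    · simpa [Fin.snoc_last] using hcpos
    case _ i => simpa [Fin.snoc_castSucc] using hdWpos i
  · -- f on the first half
    intro i
    induction i using Fin.lastCases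
    · simpa [Fin.snoc_last] using hfv
    case _ i =>
      simp only [Sum.elim_inl, Sum.elim_inr, Fin.snoc_castSucc]
      have : f (bW (Sum.inl i) : V) = ((g (bW (Sum.inl i)) : W) : V) := rfl
      rw [this, hbWl i]
      push_cast
      simp
  · -- f on the second half
    intro i
    induction i using Fin.lastCases
    · simpa [Fin.snoc_last] using hfu'
    case _ i =>
      simp only [Sum.elim_inl, Sum.elim_inr, Fin.snoc_castSucc]
      have : f (bW (Sum.inr i) : V) = ((g (bW (Sum.inr i)) : W) : V) := rfl
      rw [this, hbWr i]
      push_cast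
      simp

open scoped MatrixOrder

theorem williamson_normal_form (n : ℕ)
    (Q : Matrix (Fin n ⊕ Fin n) (Fin n ⊕ Fin n) ℝ) (hQ : Q.PosDef)
    (J : Matrix (Fin n ⊕ Fin n) (Fin n ⊕ Fin n) ℝ)
    (hJ : J = Matrix.fromBlocks 0 1 (-1) 0) :
    ∃ (P : Matrix (Fin n ⊕ Fin n) (Fin n ⊕ Fin n) ℝ) (ω : Fin n → ℝ),
      Pᵀ * J * P = J ∧ (∀ j, 0 < ω j) ∧
      Pᵀ * Q * P = Matrix.diagonal (Sum.elim ω ω) := by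
  -- square root of Q
  set R : Matrix (Fin n ⊕ Fin n) (Fin n ⊕ Fin n) ℝ := CFC.sqrt Q with hR
  have hRR : R * R = Q := CFC.sqrt_mul_sqrt_self Q hQ.posSemidef.nonneg
  have hRT : Rᵀ = R := by
    have := (Matrix.nonneg_iff_posSemidef.1 (CFC.sqrt_nonneg Q)).1
    rwa [Matrix.IsHermitian, Matrix.conjTranspose_eq_transpose_of_trivial] at this
  have hRdet : IsUnit R.det := by
    have hQdet : IsUnit Q.det := isUnit_iff_ne_zero.2 hQ.det_pos.ne'
    rw [← hRR, Matrix.det_mul] at hQdet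
    exact (IsUnit.mul_iff.1 hQdet).1
  have hRinv : R * R⁻¹ = 1 := Matrix.mul_nonsing_inv R hRdet
  have hinvR : R⁻¹ * R = 1 := Matrix.nonsing_inv_mul R hRdet
  have hRinvT : (R⁻¹)ᵀ = R⁻¹ := by rw [Matrix.transpose_nonsing_inv, hRT]
  -- basic facts about J
  have hJT : Jᵀ = -J := by
    rw [hJ, Matrix.fromBlocks_transpose, Matrix.fromBlocks_neg]
    simp
  have hJJ : J * J = -1 := by
    rw [hJ, Matrix.fromBlocks_multiply, ← Matrix.fromBlocks_one, Matrix.fromBlocks_neg]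
    simp
  -- the skew matrix M
  set M : Matrix (Fin n ⊕ Fin n) (Fin n ⊕ Fin n) ℝ := R⁻¹ * J * R⁻¹ with hM
  have hMT : Mᵀ = -M := by
    rw [hM, Matrix.transpose_mul, Matrix.transpose_mul, hRinvT, hJT]
    simp [Matrix.mul_assoc]
  have hMN : M * (R * -J * R) = 1 := by
    rw [hM]
    calc R⁻¹ * J * R⁻¹ * (R * -J * R)
        = R⁻¹ * J * (R⁻¹ * (R * (-J * R))) := by simp only [Matrix.mul_assoc]
      _ = R⁻¹ * J * (R⁻¹ * R * (-J * R)) := by rw [Matrix.mul_assoc R⁻¹ R]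
      _ = R⁻¹ * J * (-J * R) := by rw [hinvR, Matrix.one_mul]
      _ = R⁻¹ * (J * -J) * R := by simp only [Matrix.mul_assoc]
      _ = R⁻¹ * R := by rw [mul_neg, hJJ, neg_neg, Matrix.mul_one]
      _ = 1 := hinvR
  have hNM : (R * -J * R) * M = 1 := mul_eq_one_comm.1 hMN
  -- the associated linear map on Euclidean space
  set f : EuclideanSpace ℝ (Fin n ⊕ Fin n) →ₗ[ℝ] EuclideanSpace ℝ (Fin n ⊕ Fin n) :=
    Matrix.toEuclideanLin M with hf
  have hfapply : ∀ (x : EuclideanSpace ℝ (Fin n ⊕ Fin n)) (i : Fin n ⊕ Fin n),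
      f x i = M.mulVec x i := fun _ _ => rfl
  have hinner : ∀ x y : EuclideanSpace ℝ (Fin n ⊕ Fin n),
      ⟪x, y⟫ = (fun i => x i) ⬝ᵥ (fun i => y i) := by
    intro x y
    rw [PiLp.inner_apply]
    simp [dotProduct, mul_comm]
  have hskew : ∀ x y : EuclideanSpace ℝ (Fin n ⊕ Fin n), ⟪f x, y⟫ = -⟪x, f y⟫ := by
    intro x y
    rw [hinner, hinner]
    have h1 : (fun i => f x i) = M.mulVec (fun i => x i) := funext fun i => hfapply x i
    have h2 : (fun i => f y i) = M.mulVec (fun i => y i) := funext fun i => hfapply y i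
    rw [h1, h2]
    calc M *ᵥ (fun i => x i) ⬝ᵥ (fun i => y i)
        = (fun i => x i) ᵥ* Mᵀ ⬝ᵥ (fun i => y i) := by rw [Matrix.vecMul_transpose]
      _ = (fun i => x i) ⬝ᵥ Mᵀ *ᵥ (fun i => y i) := by rw [Matrix.dotProduct_mulVec]
      _ = -((fun i => x i) ⬝ᵥ M *ᵥ (fun i => y i)) := by
          rw [hMT, Matrix.neg_mulVec, dotProduct_neg]
  have hinj : Function.Injective f := by
    intro x y hxy
    have hmv : M.mulVec (fun i => x i) = M.mulVec (fun i => y i) := by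
      ext i
      rw [← hfapply x i, ← hfapply y i, hxy]
    have h3 := congrArg ((R * -J * R).mulVec) hmv
    rw [Matrix.mulVec_mulVec, Matrix.mulVec_mulVec, hNM, Matrix.one_mulVec,
      Matrix.one_mulVec] at h3
    ext i
    exact congrFun h3 i
  obtain ⟨k, b, d, hdk, hon, hdpos, hbl, hbr⟩ :=
    skew_aux (finrank ℝ (EuclideanSpace ℝ (Fin n ⊕ Fin n)))
      (EuclideanSpace ℝ (Fin n ⊕ Fin n)) rfl f hskew hinj
  have hkn : k = n := by
    rw [finrank_euclideanSpace] at hdk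
    simp at hdk
    omega
  subst hkn
  -- the orthogonal matrix O
  set O : Matrix (Fin k ⊕ Fin k) (Fin k ⊕ Fin k) ℝ := Matrix.of (fun i j => b j i) with hO
  have hOO : Oᵀ * O = 1 := by
    ext i j
    have hij := orthonormal_iff_ite.1 hon i j
    rw [hinner] at hij
    simp only [Matrix.mul_apply, Matrix.transpose_apply, hO, Matrix.of_apply,
      Matrix.one_apply]
    simpa [dotProduct] using hij
  set D : Matrix (Fin k) (Fin k) ℝ := Matrix.diagonal d with hD
  set N : Matrix (Fin k ⊕ Fin k) (Fin k ⊕ Fin k) ℝ := Matrix.fromBlocks 0 D (-D) 0 with hN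
  have hMO : M * O = O * N := by
    ext i j
    have hL : ∀ a : Fin k ⊕ Fin k, (M * O) i a = f (b a) i := by
      intro a
      rw [hfapply]
      simp [Matrix.mul_apply, Matrix.mulVec, dotProduct, hO]
    cases j with
    | inl a =>
      rw [hL (Sum.inl a), hbl a]
      have hRHS : (O * N) i (Sum.inl a) = -(d a * b (Sum.inr a) i) := by
        rw [Matrix.mul_apply, Fintype.sum_sum_type]
        simp [hN, hD, hO, Matrix.fromBlocks, Matrix.diagonal_apply, mul_comm,
          Finset.sum_ite_eq, Finset.sum_ite_eq', Finset.mul_sum]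
      rw [hRHS]
      simp
    | inr a =>
      rw [hL (Sum.inr a), hbr a]
      have hRHS : (O * N) i (Sum.inr a) = d a * b (Sum.inl a) i := by
        rw [Matrix.mul_apply, Fintype.sum_sum_type]
        simp [hN, hD, hO, Matrix.fromBlocks, Matrix.diagonal_apply, mul_comm,
          Finset.sum_ite_eq, Finset.sum_ite_eq', Finset.mul_sum]
      rw [hRHS]
      simp
  have hOMO : Oᵀ * M * O = N := by
    rw [Matrix.mul_assoc, hMO, ← Matrix.mul_assoc, hOO, Matrix.one_mul]
  -- the rescaling diagonal matrix
  set s : Fin k → ℝ := fun i => (Real.sqrt (d i))⁻¹ with hs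
  have hsd : ∀ i, s i * d i * s i = 1 := by
    intro i
    rw [hs]
    have h1 : Real.sqrt (d i) * Real.sqrt (d i) = d i := Real.mul_self_sqrt (hdpos i).le
    have h2 : Real.sqrt (d i) ≠ 0 := by
      have := Real.sqrt_pos.2 (hdpos i)
      exact this.ne'
    field_simp
    rw [Real.sq_sqrt (hdpos i).le]
  have hss : ∀ i, s i * s i = (d i)⁻¹ := by
    intro i
    rw [hs, ← mul_inv]
    rw [Real.mul_self_sqrt (hdpos i).le]
  set S : Matrix (Fin k) (Fin k) ℝ := Matrix.diagonal s with hS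
  set Δ : Matrix (Fin k ⊕ Fin k) (Fin k ⊕ Fin k) ℝ := Matrix.fromBlocks S 0 0 S with hΔ
  have hΔT : Δᵀ = Δ := by
    rw [hΔ, Matrix.fromBlocks_transpose]
    simp [hS, Matrix.diagonal_transpose]
  refine ⟨R⁻¹ * O * Δ, fun i => (d i)⁻¹, ?_, fun i => inv_pos.2 (hdpos i), ?_⟩
  · -- symplectic condition
    have hPT : (R⁻¹ * O * Δ)ᵀ = Δ * (Oᵀ * R⁻¹) := by
      rw [Matrix.transpose_mul, Matrix.transpose_mul, hRinvT, hΔT]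
    rw [hPT]
    have key : Δ * (Oᵀ * R⁻¹) * J * (R⁻¹ * O * Δ) = Δ * (Oᵀ * M * O) * Δ := by
      rw [hM]
      simp only [Matrix.mul_assoc]
    rw [key, hOMO]
    -- Δ * N * Δ = J
    have hSDS : S * D * S = 1 := by
      ext i j
      rw [hS, hD, Matrix.diagonal_mul_diagonal, Matrix.diagonal_mul_diagonal]
      by_cases h : i = j
      · subst h
        rw [Matrix.diagonal_apply_eq, Matrix.one_apply_eq, hsd i]
      · rw [Matrix.diagonal_apply_ne _ h, Matrix.one_apply_ne h]
    rw [hΔ, hN, Matrix.fromBlocks_multiply, Matrix.fromBlocks_multiply]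
    simp only [mul_zero, zero_mul, add_zero, zero_add, mul_neg, neg_mul, neg_zero]
    rw [hSDS, hJ]
  · -- diagonalization of Q
    have hPT : (R⁻¹ * O * Δ)ᵀ = Δ * (Oᵀ * R⁻¹) := by
      rw [Matrix.transpose_mul, Matrix.transpose_mul, hRinvT, hΔT]
    rw [hPT]
    have key : Δ * (Oᵀ * R⁻¹) * Q * (R⁻¹ * O * Δ) = Δ * (Oᵀ * (R⁻¹ * Q * R⁻¹) * O) * Δ := by
      simp only [Matrix.mul_assoc]
    rw [key]
    have hRQR : R⁻¹ * Q * R⁻¹ = 1 := by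
      rw [← hRR, ← Matrix.mul_assoc R⁻¹ R R, hinvR, Matrix.one_mul, hRinv]
    rw [hRQR, Matrix.mul_one, hOO, Matrix.mul_one]
    rw [hΔ, hS, Matrix.fromBlocks_multiply]
    simp only [mul_zero, zero_mul, add_zero, zero_add, Matrix.diagonal_mul_diagonal]
    rw [Matrix.fromBlocks_diagonal]
    refine congrArg Matrix.diagonal (funext fun i => ?_)
    cases i with
    | inl a => simpa using hss a
    | inr a => simpa using hss a
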